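/- Let C₁, …, C_m be nonempty closed convex subsets of the Euclidean space ℝⁿ and consider the cyclic projection iteration x^{k+1} = P_{(k mod m)+1}(x^k). Suppose that for at least one starting point x⁰ ∈ ℝⁿ the subsequence (x^{km+1})_{k≥0} of the generated sequence is bounded. Then for every sequence (x^k)_{k≥0} generated by this iteration (from any starting point) there exist points x^{*,i} ∈ C_i, i = 1, …, m, such that P_{i+1}(x^{*,i}) = x^{*,i+1} for i = 1, …, m−1 and P₁(x^{*,m}) = x^{*,1}, and for each i = 1, …, m: lim_{k→∞} (x^{km+i+1} − x^{km+i}) = x^{*,i+1} − x^{*,i} and lim_{k→∞} x^{km+i} = x^{*,i}. -/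

import Mathlib

open Filter
open RealInnerProductSpace

/-- `P` is the metric (nearest-point) projection onto the set `C`. -/
def IsProjOn {H : Type*} [NormedAddCommGroup H] (P : H → H) (C : Set H) : Prop :=
  ∀ x : H, P x ∈ C ∧ ∀ y ∈ C, ‖x - P x‖ ≤ ‖x - y‖


lemma le_of_sq_le_sq' {a b : ℝ} (ha : 0 ≤ a) (hb : 0 ≤ b) (h : a^2 ≤ b^2) : a ≤ b := by nlinarith

theorem projOn_inner_nonpos {F : Type*} [NormedAddCommGroup F] [InnerProductSpace ℝ F]
    {P : F → F} {C : Set F} (hP : ∀ x : F, P x ∈ C ∧ ∀ y ∈ C, ‖x - P x‖ ≤ ‖x - y‖)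
    (hcv : Convex ℝ C) (x : F) : ∀ y ∈ C, ⟪x - P x, y - P x⟫ ≤ 0 := by
  have hmem := (hP x).1
  have hmin := (hP x).2
  haveI : Nonempty C := ⟨⟨P x, hmem⟩⟩
  rw [← norm_eq_iInf_iff_real_inner_le_zero hcv hmem]
  refine le_antisymm (le_ciInf fun w => hmin w w.2) ?_
  exact ciInf_le ⟨0, by rintro _ ⟨w, rfl⟩; positivity⟩ (⟨P x, hmem⟩ : C)

theorem projOn_firm {F : Type*} [NormedAddCommGroup F] [InnerProductSpace ℝ F]
    {P : F → F} {C : Set F} (hP : ∀ x : F, P x ∈ C ∧ ∀ y ∈ C, ‖x - P x‖ ≤ ‖x - y‖)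
    (hcv : Convex ℝ C) (a b : F) :
    ‖P a - P b‖^2 + ‖(a - P a) - (b - P b)‖^2 ≤ ‖a - b‖^2 := by
  have h1 : ⟪a - P a, P b - P a⟫ ≤ 0 := projOn_inner_nonpos hP hcv a (P b) (hP b).1
  have h2 : ⟪b - P b, P a - P b⟫ ≤ 0 := projOn_inner_nonpos hP hcv b (P a) (hP a).1
  have h1' : 0 ≤ ⟪a - P a, P a - P b⟫ := by
    rw [show P b - P a = -(P a - P b) by abel, inner_neg_right] at h1; linarith
  have key : a - b = (P a - P b) + ((a - P a) - (b - P b)) := by abel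
  rw [key, norm_add_sq_real]
  have hx : ⟪P a - P b, (a - P a) - (b - P b)⟫
      = ⟪P a - P b, a - P a⟫ - ⟪P a - P b, b - P b⟫ := inner_sub_right _ _ _
  have c1 := real_inner_comm (P a - P b) (a - P a)
  have c2 := real_inner_comm (P a - P b) (b - P b)
  nlinarith [h1', h2, hx, c1, c2]

theorem projOn_norm_le {F : Type*} [NormedAddCommGroup F] [InnerProductSpace ℝ F]
    {P : F → F} {C : Set F} (hP : ∀ x : F, P x ∈ C ∧ ∀ y ∈ C, ‖x - P x‖ ≤ ‖x - y‖)
    (hcv : Convex ℝ C) (a b : F) : ‖P a - P b‖ ≤ ‖a - b‖ := by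
  refine le_of_sq_le_sq' (norm_nonneg _) (norm_nonneg _) ?_
  have := projOn_firm hP hcv a b
  nlinarith [sq_nonneg ‖(a - P a) - (b - P b)‖]

theorem projOn_continuous {F : Type*} [NormedAddCommGroup F] [InnerProductSpace ℝ F]
    {P : F → F} {C : Set F} (hP : ∀ x : F, P x ∈ C ∧ ∀ y ∈ C, ‖x - P x‖ ≤ ‖x - y‖)
    (hcv : Convex ℝ C) : Continuous P := by
  refine (LipschitzWith.of_dist_le_mul (K := 1) fun a b => ?_).continuous
  simpa [dist_eq_norm] using projOn_norm_le hP hcv a b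


abbrev Euc (n : ℕ) := EuclideanSpace ℝ (Fin n)

def idx (m : ℕ) [NeZero m] (t : ℕ) : Fin m :=
  ⟨t % m, Nat.mod_lt t (Nat.pos_of_ne_zero (NeZero.ne m))⟩

def chain {n m : ℕ} [NeZero m] (P : Fin m → Euc n → Euc n) : ℕ → Euc n → Euc n
  | 0, z => z
  | (t+1), z => P (idx m (t+1)) (chain P t z)

lemma chain_succ {n m : ℕ} [NeZero m] (P : Fin m → Euc n → Euc n) (t : ℕ) (z : Euc n) :
    chain P (t+1) z = P (idx m (t+1)) (chain P t z) := rfl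

lemma chain_continuous {n m : ℕ} [NeZero m] {P : Fin m → Euc n → Euc n}
    {C : Fin m → Set (Euc n)}
    (hP : ∀ i, ∀ x, P i x ∈ C i ∧ ∀ y ∈ C i, ‖x - P i x‖ ≤ ‖x - y‖)
    (hcv : ∀ i, Convex ℝ (C i)) : ∀ t, Continuous (chain P t)
  | 0 => continuous_id
  | (t+1) => (projOn_continuous (hP _) (hcv _)).comp (chain_continuous hP hcv t)

lemma chain_firm_sum {n m : ℕ} [NeZero m] {P : Fin m → Euc n → Euc n}
    {C : Fin m → Set (Euc n)}
    (hP : ∀ i, ∀ x, P i x ∈ C i ∧ ∀ y ∈ C i, ‖x - P i x‖ ≤ ‖x - y‖)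
    (hcv : ∀ i, Convex ℝ (C i)) (a b : Euc n) : ∀ T,
    ‖chain P T a - chain P T b‖^2
      + ∑ t ∈ Finset.range T,
          ‖(chain P t a - chain P (t+1) a) - (chain P t b - chain P (t+1) b)‖^2
      ≤ ‖a - b‖^2
  | 0 => by simp [chain]
  | (T+1) => by
    have ih := chain_firm_sum hP hcv a b T
    have hf := projOn_firm (hP (idx m (T+1))) (hcv _) (chain P T a) (chain P T b)
    rw [Finset.sum_range_succ]
    rw [chain_succ, chain_succ]
    set pa := chain P T a
    set pb := chain P T b
    set Q := P (idx m (T+1))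
    have : ‖Q pa - Q pb‖ ^ 2 + ‖pa - Q pa - (pb - Q pb)‖ ^ 2 ≤ ‖pa - pb‖ ^ 2 := hf
    linarith

lemma chain_nonexpansive {n m : ℕ} [NeZero m] {P : Fin m → Euc n → Euc n}
    {C : Fin m → Set (Euc n)}
    (hP : ∀ i, ∀ x, P i x ∈ C i ∧ ∀ y ∈ C i, ‖x - P i x‖ ≤ ‖x - y‖)
    (hcv : ∀ i, Convex ℝ (C i)) (T : ℕ) (a b : Euc n) :
    ‖chain P T a - chain P T b‖ ≤ ‖a - b‖ := by
  refine le_of_sq_le_sq' (norm_nonneg _) (norm_nonneg _) ?_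
  have := chain_firm_sum hP hcv a b T
  have hnn : (0:ℝ) ≤ ∑ t ∈ Finset.range T,
      ‖(chain P t a - chain P (t+1) a) - (chain P t b - chain P (t+1) b)‖^2 :=
    Finset.sum_nonneg fun _ _ => by positivity
  linarith

lemma orbit_chain {n m : ℕ} [NeZero m] (P : Fin m → Euc n → Euc n) (x : ℕ → Euc n)
    (hx : ∀ k, x (k+1) = P (idx m k) (x k)) (k : ℕ) :
    ∀ t, x (k*m + 1 + t) = chain P t (x (k*m + 1))
  | 0 => rfl
  | (t+1) => by
    have h1 : x (k*m + 1 + t + 1) = P (idx m (k*m + 1 + t)) (x (k*m + 1 + t)) := hx _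
    have h2 : idx m (k*m + 1 + t) = idx m (t+1) := by
      unfold idx
      congr 1
      rw [show k*m + 1 + t = (t+1) + k*m by ring, Nat.add_mul_mod_self_right]
    rw [show k*m + 1 + (t+1) = k*m + 1 + t + 1 by ring, h1, h2,
      orbit_chain P x hx k t]
    exact (chain_succ P t _).symm


theorem exists_fixedPoint {n : ℕ} (Q : Euc n → Euc n)
    (hQ : ∀ a b, ‖Q a - Q b‖ ≤ ‖a - b‖)
    (u : ℕ → Euc n) (hu : ∀ k, u (k + 1) = Q (u k)) {R : ℝ}
    (hR : ∀ k, ‖u k‖ ≤ R) : ∃ p, Q p = p := by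
  have hR0 : 0 ≤ R := le_trans (norm_nonneg _) (hR 0)
  set ψ : Euc n → ℝ := fun z => limsup (fun k => ‖u k - z‖^2) atTop with hψ
  have hptb : ∀ z (k : ℕ), ‖u k - z‖^2 ≤ (R + ‖z‖)^2 := fun z k => by
    have h1 : ‖u k - z‖ ≤ R + ‖z‖ := (norm_sub_le _ _).trans (by linarith [hR k])
    nlinarith [norm_nonneg (u k - z)]
  have hbd : ∀ z, IsBoundedUnder (· ≤ ·) atTop (fun k => ‖u k - z‖^2) := fun z =>
    isBoundedUnder_of ⟨(R + ‖z‖)^2, fun k => hptb z k⟩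
  have hcb : ∀ z, IsCoboundedUnder (· ≤ ·) atTop (fun k => ‖u k - z‖^2) := fun z =>
    isCoboundedUnder_le_of_le atTop (fun k => by positivity)
  have hψle : ∀ z, ψ z ≤ (R + ‖z‖)^2 := fun z =>
    limsup_le_of_le (hcb z) (Eventually.of_forall (hptb z))
  have hψge : ∀ (z : Euc n) (c : ℝ), (∀ k, c ≤ ‖u k - z‖^2) → c ≤ ψ z := fun z c h =>
    le_limsup_of_frequently_le (Frequently.of_forall h) (hbd z)
  set B := Metric.closedBall (0 : Euc n) (3*R + 1) with hB
  set M : ℝ := 14*R + 4 with hM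
  have hlip : ∀ z ∈ B, ∀ z' ∈ B, ψ z ≤ ψ z' + M * ‖z - z'‖ := by
    intro z hz z' hz'
    have hz1 : ‖z‖ ≤ 3*R+1 := by
      simpa [hB, dist_eq_norm] using Metric.mem_closedBall.mp hz
    have hz2 : ‖z'‖ ≤ 3*R+1 := by
      simpa [hB, dist_eq_norm] using Metric.mem_closedBall.mp hz'
    have hpt : ∀ k : ℕ, ‖u k - z‖^2 ≤ ‖u k - z'‖^2 + M * ‖z - z'‖ := by
      intro k
      have e1 : ‖u k - z‖ ≤ ‖u k - z'‖ + ‖z' - z‖ := by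
        have := dist_triangle (u k) z' z
        simpa [dist_eq_norm] using this
      have e2 : ‖z' - z‖ = ‖z - z'‖ := norm_sub_rev _ _
      have e3 : ‖u k - z'‖ ≤ R + ‖z'‖ := (norm_sub_le _ _).trans (by linarith [hR k])
      have e4 : ‖z - z'‖ ≤ ‖z‖ + ‖z'‖ := norm_sub_le _ _
      nlinarith [norm_nonneg (u k - z), norm_nonneg (u k - z'), norm_nonneg (z - z')]
    have hbd' : IsBoundedUnder (· ≤ ·) atTop (fun k => ‖u k - z'‖^2 + M * ‖z - z'‖) :=
      isBoundedUnder_of ⟨(R + ‖z'‖)^2 + M * ‖z - z'‖, fun k => by linarith [hptb z' k]⟩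
    have h1 : ψ z ≤ limsup (fun k => ‖u k - z'‖^2 + M * ‖z - z'‖) atTop :=
      limsup_le_limsup (Eventually.of_forall hpt) (hcb z) hbd'
    rwa [limsup_add_const atTop _ (M * ‖z - z'‖) (hbd z') (hcb z')] at h1
  have hM0 : (0:ℝ) ≤ M := by rw [hM]; linarith
  have hcont : ContinuousOn ψ B := by
    refine (LipschitzOnWith.of_dist_le_mul (K := ⟨M, hM0⟩) ?_).continuousOn
    intro z hz z' hz'
    rw [Real.dist_eq, dist_eq_norm]
    rw [abs_sub_le_iff]
    show ψ z - ψ z' ≤ M * ‖z - z'‖ ∧ ψ z' - ψ z ≤ M * ‖z - z'‖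
    have l1 := hlip z hz z' hz'
    have l2 := hlip z' hz' z hz
    rw [norm_sub_rev] at l2
    constructor <;> [linarith; linarith]
  have hBne : (0 : Euc n) ∈ B := Metric.mem_closedBall_self (by linarith)
  obtain ⟨c, hcB, hcmin⟩ :=
    (isCompact_closedBall (0 : Euc n) (3*R+1)).exists_isMinOn ⟨0, hBne⟩ hcont
  have hglobal : ∀ z, ψ c ≤ ψ z := by
    intro z
    by_cases hzB : z ∈ B
    · exact hcmin hzB
    · have hz : 3*R+1 < ‖z‖ := by
        have := hzB
        rw [hB, Metric.mem_closedBall, dist_zero_right, not_le] at this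
        exact this
      have h0 : ψ c ≤ ψ 0 := hcmin hBne
      have h1 : ψ 0 ≤ R^2 := by
        have := hψle 0
        simpa using this
      have h2 : (2*R+1)^2 ≤ ψ z := by
        refine hψge z _ fun k => ?_
        have e1 : ‖z‖ - ‖u k‖ ≤ ‖z - u k‖ := norm_sub_norm_le _ _
        rw [norm_sub_rev] at e1
        have e2 : 2*R+1 ≤ ‖u k - z‖ := by linarith [hR k]
        nlinarith
      nlinarith
  refine ⟨c, ?_⟩
  by_contra hqc
  set q := Q c with hq
  have hψq : ψ q ≤ ψ c := by
    have hshift : ψ q = limsup (fun k => ‖u (k+1) - q‖^2) atTop :=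
      (limsup_nat_add (fun k => ‖u k - q‖^2) 1).symm
    rw [hψ] at hshift ⊢
    rw [hshift]
    refine limsup_le_limsup (Eventually.of_forall fun k => ?_)
      (isCoboundedUnder_le_of_le atTop (fun k => by positivity)) (hbd c)
    show ‖u (k+1) - q‖^2 ≤ ‖u k - c‖^2
    rw [hq, hu k]
    have := hQ (u k) c
    nlinarith [norm_nonneg (Q (u k) - Q c)]
  set mid : Euc n := (2⁻¹ : ℝ) • (c + q) with hmid
  have hpar : ∀ v : Euc n, ‖v - mid‖^2 = 2⁻¹*‖v - c‖^2 + 2⁻¹*‖v - q‖^2 - 4⁻¹*‖c - q‖^2 := by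
    intro v
    have h1 := norm_sub_sq_real v c
    have h2 := norm_sub_sq_real v q
    have h3 := norm_sub_sq_real c q
    have h4 := norm_sub_sq_real v mid
    have h5 : ⟪v, mid⟫ = 2⁻¹*⟪v, c⟫ + 2⁻¹*⟪v, q⟫ := by
      rw [hmid, real_inner_smul_right, inner_add_right]; ring
    have h7 := norm_add_sq_real c q
    have h6 : ‖mid‖^2 = 4⁻¹*‖c + q‖^2 := by
      rw [hmid, norm_smul]
      simp [Real.norm_eq_abs]
      rw [mul_pow]
      norm_num
    rw [h4, h5, h6, h7]
    linarith
  have hbd2 : ∀ z, IsBoundedUnder (· ≤ ·) atTop (fun k => 2⁻¹*‖u k - z‖^2) := fun z =>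
    isBoundedUnder_of ⟨2⁻¹*(R + ‖z‖)^2, fun k => by linarith [hptb z k]⟩
  have hlb2 : ∀ z, IsBoundedUnder (· ≥ ·) atTop (fun k => 2⁻¹*‖u k - z‖^2) := fun z =>
    isBoundedUnder_of ⟨0, fun k => by positivity⟩
  have hcb2 : ∀ z, IsCoboundedUnder (· ≤ ·) atTop (fun k => 2⁻¹*‖u k - z‖^2) := fun z =>
    (hlb2 z).isCoboundedUnder_le
  have hhalf : ∀ z, limsup (fun k => 2⁻¹*‖u k - z‖^2) atTop = 2⁻¹ * ψ z := by
    intro z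
    have hm : Monotone (fun x : ℝ => 2⁻¹ * x) := fun a b h => by dsimp; linarith
    have hcont2 : ContinuousAt (fun x : ℝ => 2⁻¹ * x)
        (limsup (fun k => ‖u k - z‖^2) atTop) := by fun_prop
    have := hm.map_limsup_of_continuousAt (F := atTop) (a := fun k => ‖u k - z‖^2)
      hcont2 (hbd z) (hcb z)
    rw [hψ]
    exact this.symm
  have hkey : ψ mid ≤ 2⁻¹ * ψ c + 2⁻¹ * ψ q - 4⁻¹*‖c - q‖^2 := by
    have e1 : (fun k : ℕ => ‖u k - mid‖^2)
        = (fun k : ℕ => (2⁻¹*‖u k - c‖^2 + 2⁻¹*‖u k - q‖^2) + (-(4⁻¹*‖c - q‖^2))) :=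
      funext fun k => by rw [hpar (u k)]; ring
    have hbdsum : IsBoundedUnder (· ≤ ·) atTop
        (fun k => 2⁻¹*‖u k - c‖^2 + 2⁻¹*‖u k - q‖^2) :=
      isBoundedUnder_of ⟨2⁻¹*(R+‖c‖)^2 + 2⁻¹*(R+‖q‖)^2,
        fun k => by linarith [hptb c k, hptb q k]⟩
    have hcbsum : IsCoboundedUnder (· ≤ ·) atTop
        (fun k => 2⁻¹*‖u k - c‖^2 + 2⁻¹*‖u k - q‖^2) :=
      isCoboundedUnder_le_of_le atTop (fun k => by positivity)
    have e2 : ψ mid = limsup (fun k => 2⁻¹*‖u k - c‖^2 + 2⁻¹*‖u k - q‖^2) atTop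
        + (-(4⁻¹*‖c - q‖^2)) := by
      rw [hψ]
      show limsup _ atTop = _
      rw [e1]
      exact limsup_add_const atTop _ _ hbdsum hcbsum
    have hadd : limsup ((fun k => 2⁻¹*‖u k - c‖^2) + (fun k => 2⁻¹*‖u k - q‖^2)) atTop
        ≤ limsup (fun k => 2⁻¹*‖u k - c‖^2) atTop
          + limsup (fun k => 2⁻¹*‖u k - q‖^2) atTop :=
      limsup_add_le (hlb2 c) (hbd2 c) (hcb2 q) (hbd2 q)
    have hadd' : limsup (fun k => 2⁻¹*‖u k - c‖^2 + 2⁻¹*‖u k - q‖^2) atTop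
        ≤ 2⁻¹ * ψ c + 2⁻¹ * ψ q := by
      rw [hhalf c, hhalf q] at hadd
      exact hadd
    rw [e2]
    linarith
  have hmin2 : ψ c ≤ ψ mid := hglobal mid
  have hδ : 0 < ‖c - q‖^2 := by
    have hne : c - q ≠ 0 := sub_ne_zero.mpr (fun h => hqc h.symm)
    exact pow_pos (norm_pos_iff.mpr hne) 2
  linarith


/-- Censor–Tom: for cyclic projections onto nonempty closed convex subsets of Euclidean
space, if for at least one starting point the cyclic subsequence `(x^{km+1})_k` is
bounded, then for every generated sequence there is a cycle `(x^{*,i})` such that the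
consecutive differences and the cyclic subsequences converge as stated.
(Indices are `0`-based: `C i` is `C_{i+1}`, and `x (k*m + i + 1) ∈ C i`.) -/
theorem stmt11 {n m : ℕ} [NeZero m]
    (C : Fin m → Set (EuclideanSpace ℝ (Fin n)))
    (hne : ∀ i, (C i).Nonempty) (hcl : ∀ i, IsClosed (C i)) (hcv : ∀ i, Convex ℝ (C i))
    (P : Fin m → EuclideanSpace ℝ (Fin n) → EuclideanSpace ℝ (Fin n))
    (hP : ∀ i, IsProjOn (P i) (C i))
    (hbdd : ∃ y : ℕ → EuclideanSpace ℝ (Fin n),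
      (∀ k : ℕ, y (k + 1) =
        P ⟨k % m, Nat.mod_lt k (Nat.pos_of_ne_zero (NeZero.ne m))⟩ (y k)) ∧
      Bornology.IsBounded (Set.range fun k : ℕ => y (k * m + 1))) :
    ∀ x : ℕ → EuclideanSpace ℝ (Fin n),
      (∀ k : ℕ, x (k + 1) =
        P ⟨k % m, Nat.mod_lt k (Nat.pos_of_ne_zero (NeZero.ne m))⟩ (x k)) →
      ∃ xs : Fin m → EuclideanSpace ℝ (Fin n),
        (∀ i, xs i ∈ C i) ∧
        (∀ i : Fin m, P (i + 1) (xs i) = xs (i + 1)) ∧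
        (∀ i : Fin m,
          Tendsto (fun k : ℕ => x (k * m + (i : ℕ) + 2) - x (k * m + (i : ℕ) + 1)) atTop
            (nhds (xs (i + 1) - xs i))) ∧
        (∀ i : Fin m,
          Tendsto (fun k : ℕ => x (k * m + (i : ℕ) + 1)) atTop (nhds (xs i))) := by
  intro x hx
  have hP' : ∀ i, ∀ w, P i w ∈ C i ∧ ∀ y ∈ C i, ‖w - P i w‖ ≤ ‖w - y‖ := fun i => hP i
  have hx' : ∀ k, x (k+1) = P (idx m k) (x k) := hx
  obtain ⟨y, hy, hybdd⟩ := hbdd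
  have hy' : ∀ k, y (k+1) = P (idx m k) (y k) := hy
  have hQne : ∀ a b : Euc n, ‖chain P m a - chain P m b‖ ≤ ‖a - b‖ :=
    fun a b => chain_nonexpansive hP' hcv m a b
  have hstep : ∀ (w : ℕ → Euc n), (∀ k, w (k+1) = P (idx m k) (w k)) →
      ∀ k, w ((k+1)*m + 1) = chain P m (w (k*m+1)) := by
    intro w hw k
    have h := orbit_chain P w hw k m
    rw [show k*m + 1 + m = (k+1)*m + 1 by ring] at h
    exact h
  obtain ⟨R, hR⟩ := isBounded_iff_forall_norm_le.mp hybdd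
  obtain ⟨z, hz⟩ := exists_fixedPoint (chain P m) hQne (fun k => y (k*m+1))
      (fun k => hstep y hy' k) (fun k => hR _ ⟨k, rfl⟩)
  set u : ℕ → Euc n := fun k => x (k*m+1) with hudef
  have hu : ∀ k, u (k+1) = chain P m (u k) := fun k => hstep x hx' k
  set a : ℕ → ℝ := fun k => ‖u k - z‖^2 with ha
  have hineq : ∀ k, a (k+1) + ∑ t ∈ Finset.range m,
      ‖(chain P t (u k) - chain P (t+1) (u k)) - (chain P t z - chain P (t+1) z)‖^2
      ≤ a k := by
    intro k
    have h := chain_firm_sum hP' hcv (u k) z m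
    rw [show chain P m (u k) = u (k+1) from (hu k).symm, hz] at h
    exact h
  have hanti : ∀ k, a (k+1) ≤ a k := fun k =>
    le_trans (le_add_of_nonneg_right (Finset.sum_nonneg fun t _ => by positivity)) (hineq k)
  have haAnti : Antitone a := antitone_nat_of_succ_le hanti
  have haconv : Tendsto a atTop (nhds (⨅ k, a k)) :=
    tendsto_atTop_ciInf haAnti ⟨0, by rintro _ ⟨k, rfl⟩; positivity⟩
  have hdiff0 : Tendsto (fun k => a k - a (k+1)) atTop (nhds 0) := by
    have h2 : Tendsto (fun k => a (k+1)) atTop (nhds (⨅ k, a k)) :=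
      haconv.comp (tendsto_add_atTop_nat 1)
    simpa using haconv.sub h2
  have hDlim : ∀ t, t < m → Tendsto (fun k => chain P t (u k) - chain P (t+1) (u k)) atTop
      (nhds (chain P t z - chain P (t+1) z)) := by
    intro t ht
    have hsq : Tendsto (fun k =>
        ‖(chain P t (u k) - chain P (t+1) (u k)) - (chain P t z - chain P (t+1) z)‖^2)
        atTop (nhds 0) := by
      refine squeeze_zero (fun k => by positivity) (fun k => ?_) hdiff0
      have h1 := hineq k
      have h2 : ‖(chain P t (u k) - chain P (t+1) (u k)) - (chain P t z - chain P (t+1) z)‖^2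
          ≤ ∑ s ∈ Finset.range m,
            ‖(chain P s (u k) - chain P (s+1) (u k)) - (chain P s z - chain P (s+1) z)‖^2 :=
        Finset.single_le_sum
          (f := fun s => ‖(chain P s (u k) - chain P (s+1) (u k))
            - (chain P s z - chain P (s+1) z)‖^2)
          (fun s _ => by positivity) (Finset.mem_range.mpr ht)
      linarith
    have h3 := (Real.continuous_sqrt.tendsto 0).comp hsq
    rw [Real.sqrt_zero] at h3
    have h4 : Tendsto (fun k =>
        ‖(chain P t (u k) - chain P (t+1) (u k)) - (chain P t z - chain P (t+1) z)‖)
        atTop (nhds 0) :=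
      h3.congr (fun k => Real.sqrt_sq (norm_nonneg _))
    exact tendsto_iff_norm_sub_tendsto_zero.mpr h4
  have hE0 : ∑ t ∈ Finset.range m, (chain P t z - chain P (t+1) z) = 0 := by
    rw [Finset.sum_range_sub' (f := fun t => chain P t z), hz]
    simp [chain]
  have hsum : Tendsto (fun k => ∑ t ∈ Finset.range m,
      (chain P t (u k) - chain P (t+1) (u k))) atTop (nhds 0) := by
    have h := tendsto_finset_sum (Finset.range m)
      (fun t ht => hDlim t (Finset.mem_range.mp ht))
    rwa [hE0] at h
  have hureg : Tendsto (fun k => u k - u (k+1)) atTop (nhds 0) := by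
    refine hsum.congr (fun k => ?_)
    rw [Finset.sum_range_sub' (f := fun t => chain P t (u k)),
      show chain P m (u k) = u (k+1) from (hu k).symm]
    rfl
  have hub : ∀ k, u k ∈ Metric.closedBall z ‖u 0 - z‖ := by
    intro k
    rw [Metric.mem_closedBall, dist_eq_norm]
    exact le_of_sq_le_sq' (norm_nonneg _) (norm_nonneg _) (haAnti (Nat.zero_le k))
  obtain ⟨p, -, φ, hφ, hφt⟩ := tendsto_subseq_of_bounded Metric.isBounded_closedBall hub
  have hφat : Tendsto φ atTop atTop := hφ.tendsto_atTop
  have hp1 : Tendsto (fun j => u (φ j + 1)) atTop (nhds p) := by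
    have h1 : Tendsto (fun j => u (φ j) - u (φ j + 1)) atTop (nhds 0) := hureg.comp hφat
    have h2 := hφt.sub h1
    rw [sub_zero] at h2
    exact h2.congr (fun j => by simp only [Function.comp_apply]; abel)
  have hp2 : Tendsto (fun j => u (φ j + 1)) atTop (nhds (chain P m p)) := by
    have h := ((chain_continuous hP' hcv m).tendsto p).comp hφt
    exact h.congr (fun j => (hu (φ j)).symm)
  have hpfix : chain P m p = p := tendsto_nhds_unique hp2 hp1
  have hbanti : Antitone (fun k => ‖u k - p‖) := by
    refine antitone_nat_of_succ_le (fun k => ?_)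
    calc ‖u (k+1) - p‖ = ‖chain P m (u k) - chain P m p‖ := by rw [hu k, hpfix]
    _ ≤ ‖u k - p‖ := hQne (u k) p
  have hbconv : Tendsto (fun k => ‖u k - p‖) atTop (nhds (⨅ k, ‖u k - p‖)) :=
    tendsto_atTop_ciInf hbanti ⟨0, by rintro _ ⟨k, rfl⟩; positivity⟩
  have hsub0 : Tendsto (fun j => ‖u (φ j) - p‖) atTop (nhds 0) := by
    have h := (hφt.sub_const p).norm
    simpa using h
  have hL0 : (⨅ k, ‖u k - p‖) = 0 := tendsto_nhds_unique (hbconv.comp hφat) hsub0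
  have hulim : Tendsto u atTop (nhds p) := by
    rw [hL0] at hbconv
    exact tendsto_iff_norm_sub_tendsto_zero.mpr hbconv
  have hclim : ∀ t, Tendsto (fun k => chain P t (u k)) atTop (nhds (chain P t p)) :=
    fun t => ((chain_continuous hP' hcv t).tendsto p).comp hulim
  -- index bookkeeping
  have hxc : ∀ (i : Fin m) (k : ℕ), x (k*m + i.val + 1) = chain P i.val (u k) := by
    intro i k
    have h := orbit_chain P x hx' k i.val
    rw [show k*m + 1 + i.val = k*m + i.val + 1 by ring] at h
    exact h
  have hxc2 : ∀ (i : Fin m) (k : ℕ), x (k*m + i.val + 2) = chain P (i.val+1) (u k) := by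
    intro i k
    have h := orbit_chain P x hx' k (i.val+1)
    rw [show k*m + 1 + (i.val+1) = k*m + i.val + 2 by ring] at h
    exact h
  have hval : ∀ i : Fin m, ((i+1 : Fin m)).val = (i.val + 1) % m := by
    intro i
    rw [Fin.add_def]
    show (i.val + ((1 : Fin m)).val) % m = (i.val + 1) % m
    rw [Fin.val_one', Nat.add_mod_mod]
  have hchain_mod : ∀ i : Fin m, chain P ((i.val + 1) % m) p = chain P (i.val + 1) p := by
    intro i
    rcases Nat.lt_or_ge (i.val + 1) m with h | h
    · rw [Nat.mod_eq_of_lt h]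
    · have he : i.val + 1 = m := le_antisymm i.isLt h
      rw [he, Nat.mod_self, hpfix]
      rfl
  have hxs1 : ∀ i : Fin m, chain P ((i+1 : Fin m)).val p = chain P (i.val + 1) p := by
    intro i; rw [hval i, hchain_mod i]
  have hidx : ∀ i : Fin m, idx m (i.val + 1) = i + 1 := by
    intro i
    apply Fin.ext
    show (i.val + 1) % m = ((i+1 : Fin m)).val
    rw [hval i]
  refine ⟨fun i => chain P i.val p, ?_, ?_, ?_, ?_⟩
  · intro i
    have hm1 : ∀ k : ℕ, chain P i.val (u k) ∈ C i := by
      intro k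
      have h1 : x (k*m + i.val + 1) ∈ C (idx m (k*m + i.val)) := by
        rw [hx' (k*m + i.val)]; exact (hP' _ _).1
      have h2 : idx m (k*m + i.val) = i := by
        apply Fin.ext
        show (k*m + i.val) % m = i.val
        rw [show k*m + i.val = i.val + k*m by ring, Nat.add_mul_mod_self_right,
          Nat.mod_eq_of_lt i.isLt]
      rw [h2, hxc i k] at h1
      exact h1
    exact (hcl i).mem_of_tendsto (hclim i.val) (Eventually.of_forall hm1)
  · intro i
    show P (i+1) (chain P i.val p) = chain P ((i+1 : Fin m)).val p
    rw [hxs1 i, chain_succ, hidx i]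
  · intro i
    have t0 : Tendsto (fun k => x (k*m + i.val + 1)) atTop (nhds (chain P i.val p)) :=
      (hclim i.val).congr (fun k => (hxc i k).symm)
    have t1 : Tendsto (fun k => x (k*m + i.val + 2)) atTop (nhds (chain P (i.val+1) p)) :=
      (hclim (i.val+1)).congr (fun k => (hxc2 i k).symm)
    have := t1.sub t0
    rw [← hxs1 i] at this
    exact this
  · intro i
    exact (hclim i.val).congr (fun k => (hxc i k).symm)
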